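/- Along every differentiable solution (q, p) : I → ℝ³ × ℝ³ of the damped elastic pendulum equations q'(t) = p(t)/m, p'(t) = −k(1 − ℓ/‖q(t)‖) • q(t) + (0, 0, −m g₀) − (ε/(m‖q(t)‖²)) • ⟨q(t), p(t)⟩ • q(t), with q(t) ≠ 0 for all t ∈ I, the azimuthal angular momentum J₃(q(t), p(t)) = (q(t) ×₃ p(t))₃ (the third component of the cross product of q and p) is constant in time, for every ε ≥ 0. -/

import Mathlib

open scoped RealInnerProductSpace

/-- The azimuthal angular momentum `J₃(q, p) = (q × p)₃`, the third component of the
cross product of `q` and `p` in `ℝ³`. -/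
def J3 (q p : EuclideanSpace ℝ (Fin 3)) : ℝ := q 0 * p 1 - q 1 * p 0

/-- The gravity vector `(0, 0, -m g₀)`. -/
def grav (m g₀ : ℝ) : EuclideanSpace ℝ (Fin 3) := WithLp.toLp 2 ![0, 0, -(m * g₀)]

/-- Along every differentiable solution of the damped elastic pendulum equations
`q' = p/m`, `p' = -k(1 - ℓ/‖q‖) q + (0,0,-m g₀) - (ε/(m ‖q‖²)) ⟪q,p⟫ q` with `q(t) ≠ 0`,
the azimuthal angular momentum `J₃(q,p)` is constant in time, for every `ε ≥ 0`. -/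
theorem elastic_pendulum_conserves_azimuthal_momentum
    (m k ℓ : ℝ) (hm : 0 < m) (hk : 0 < k) (hl : 0 < ℓ) (g₀ : ℝ)
    (ε : ℝ) (hε : 0 ≤ ε)
    (I : Set ℝ) (hI : I.OrdConnected)
    (q p : ℝ → EuclideanSpace ℝ (Fin 3))
    (hq0 : ∀ t ∈ I, q t ≠ 0)
    (hq : ∀ t ∈ I, HasDerivAt q (m⁻¹ • p t) t)
    (hp : ∀ t ∈ I, HasDerivAt p
      ((-(k * (1 - ℓ / ‖q t‖))) • q t + grav m g₀
        - (ε / (m * ‖q t‖ ^ 2)) • (⟪q t, p t⟫ • q t)) t) :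
    ∀ t ∈ I, ∀ t' ∈ I, J3 (q t) (p t) = J3 (q t') (p t') := by
  have hconv : Convex ℝ I := convex_iff_ordConnected.2 hI
  have key : ∀ t ∈ I, HasDerivAt (fun s => J3 (q s) (p s)) 0 t := by
    intro t ht
    have hqc : ∀ i : Fin 3, HasDerivAt (fun s => q s i) ((m⁻¹ • p t) i) t := fun i => by
      have := (EuclideanSpace.proj (𝕜 := ℝ) i).hasFDerivAt.comp_hasDerivAt t (hq t ht)
      exact this
    have hpc : ∀ i : Fin 3, HasDerivAt (fun s => p s i)
        (((-(k * (1 - ℓ / ‖q t‖))) • q t + grav m g₀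
          - (ε / (m * ‖q t‖ ^ 2)) • (⟪q t, p t⟫ • q t)) i) t := fun i => by
      have := (EuclideanSpace.proj (𝕜 := ℝ) i).hasFDerivAt.comp_hasDerivAt t (hp t ht)
      exact this
    have := (((hqc 0).mul (hpc 1)).sub ((hqc 1).mul (hpc 0)))
    refine this.congr_deriv ?_
    simp only [J3, PiLp.add_apply, PiLp.sub_apply, PiLp.smul_apply, smul_eq_mul, grav]
    norm_num
    ring
  intro t ht t' ht'
  have := hconv.norm_image_sub_le_of_norm_hasDerivWithin_le
    (f := fun s => J3 (q s) (p s)) (C := 0)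
    (fun s hs => (key s hs).hasDerivWithinAt) (fun s _ => by simp) ht' ht
  simp at this
  linarith [abs_nonneg (J3 (q t) (p t) - J3 (q t') (p t')),
    abs_sub_abs_le_abs_sub (J3 (q t) (p t)) (J3 (q t') (p t')),
    (abs_eq_zero.mp (le_antisymm (by simpa using this) (abs_nonneg _)) :
      J3 (q t) (p t) - J3 (q t') (p t') = 0)]
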